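/- arXiv:1501.03759 — 2 statements merged into one kernel-verified Lean document; each statement's English description precedes it below -/
import Mathlib

section
/- The number of connected components on exactly i labeled vertices that can occur in a geometric graph on n points, counted via spanning trees, satisfies: the expected number of connected subsets of size i among n i.i.d. points in ℝ^d with bounded density f and connection radius r is at most C(n,i) · i^{i-2} · (‖f‖_∞ · θ_d · (2 i r)^d)^{i-1}, where θ_d is the volume of the unit ball. -/
open MeasureTheory Metric

/-- The geometric graph on points `pts` with connection radius `r`. -/
def geomGraph {n d : ℕ} (r : ℝ) (pts : Fin n → EuclideanSpace ℝ (Fin d)) :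
    SimpleGraph (Fin n) :=
  SimpleGraph.fromRel fun a b => dist (pts a) (pts b) ≤ r

/-- The number of `i`-element subsets of the `n` points that induce a connected subgraph of
the geometric graph with radius `r`. -/
noncomputable def connCount {n d : ℕ} (i : ℕ) (r : ℝ)
    (pts : Fin n → EuclideanSpace ℝ (Fin d)) : ℕ :=
  (@Finset.filter (Finset (Fin n))
    (fun S : Finset (Fin n) =>
      ((geomGraph r pts).induce (S : Set (Fin n))).Connected)
    (Classical.decPred _) (Finset.univ.powersetCard i)).card

lemma walk_dist_le {V : Type*} {G : SimpleGraph V} {d : ℕ}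
    (φ : V → EuclideanSpace ℝ (Fin d)) {r : ℝ}
    (hadj : ∀ a b, G.Adj a b → dist (φ a) (φ b) ≤ r) :
    ∀ {a b : V} (w : G.Walk a b), dist (φ a) (φ b) ≤ w.length * r := by
  intro a b w
  induction w with
  | nil => simp
  | @cons u v c h w ih =>
    have h1 := hadj _ _ h
    have h2 := dist_triangle (φ u) (φ v) (φ c)
    simp only [SimpleGraph.Walk.length_cons]
    push_cast
    nlinarith

lemma connected_dist_le {n d i : ℕ} {r : ℝ} (hr : 0 ≤ r)
    (pts : Fin n → EuclideanSpace ℝ (Fin d)) (S : Finset (Fin n)) (hS : S.card = i)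
    (hconn : ((geomGraph r pts).induce (S : Set (Fin n))).Connected)
    {a b : Fin n} (ha : a ∈ S) (hb : b ∈ S) :
    dist (pts a) (pts b) ≤ 2 * i * r := by
  haveI : Fintype ((S : Set (Fin n)) : Set (Fin n)).Elem := Fintype.ofFinite _
  obtain ⟨w⟩ := hconn.preconnected ⟨a, by simpa using ha⟩ ⟨b, by simpa using hb⟩
  have hpath := w.toPath.2.length_lt
  have hcard : Fintype.card ((S : Set (Fin n)) : Set (Fin n)).Elem = i := by
    rw [← Nat.card_eq_fintype_card, Nat.card_coe_set_eq, Set.ncard_coe_finset, hS]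
  rw [hcard] at hpath
  have hadj : ∀ u v : (S : Set (Fin n)).Elem,
      ((geomGraph r pts).induce (S : Set (Fin n))).Adj u v →
        dist (pts u) (pts v) ≤ r := by
    intro u v huv
    rw [SimpleGraph.comap_adj] at huv
    simp only [geomGraph, SimpleGraph.fromRel_adj] at huv
    rcases huv.2 with h | h
    · exact h
    · rwa [dist_comm]
  have := walk_dist_le (fun v : (S : Set (Fin n)).Elem => pts v) hadj w.toPath.1
  calc dist (pts a) (pts b) ≤ (w.toPath.1.length : ℝ) * r := this
    _ ≤ 2 * i * r := by
        apply mul_le_mul_of_nonneg_right _ hr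
        have : w.toPath.1.length ≤ 2 * i := by omega
        exact_mod_cast this

/-- The expected number of connected subsets of size `i` among `n` i.i.d. points in `ℝ^d`
with density `f ≤ Mf` and connection radius `r` is at most
`C(n,i) · i^{i-2} · (Mf · θ_d · (2 i r)^d)^{i-1}`, where `θ_d` is the volume of the unit
ball. -/
theorem expected_connected_subsets_le {Ω : Type*} [MeasurableSpace Ω] (μ : Measure Ω)
    [IsProbabilityMeasure μ] (n d i : ℕ) (hd : 1 ≤ d) (hi : 1 ≤ i) (r : ℝ) (hr : 0 < r)
    (f : EuclideanSpace ℝ (Fin d) → ℝ) (Mf : ℝ) (hf0 : ∀ x, 0 ≤ f x)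
    (hfM : ∀ x, f x ≤ Mf)
    (X : Fin n → Ω → EuclideanSpace ℝ (Fin d))
    (hmeas : ∀ j, Measurable (X j))
    (hindep : ProbabilityTheory.iIndepFun X μ)
    (hlaw : ∀ j, Measure.map (X j) μ
      = MeasureTheory.volume.withDensity fun x => ENNReal.ofReal (f x)) :
    (∫ ω, (connCount i r (fun j => X j ω) : ℝ) ∂μ)
      ≤ (n.choose i : ℝ) * (i : ℝ) ^ ((i : ℤ) - 2) *
        (Mf * (MeasureTheory.volume (ball (0 : EuclideanSpace ℝ (Fin d)) 1)).toReal *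
          (2 * i * r) ^ d) ^ (i - 1) := by
  classical
  have hMf0 : 0 ≤ Mf := le_trans (hf0 0) (hfM 0)
  set R : ℝ := 2 * (i : ℝ) * r with hRdef
  have hR0 : 0 < R := by positivity
  set θ : ENNReal := volume (ball (0 : EuclideanSpace ℝ (Fin d)) 1) with hθ
  set P : Finset (Finset (Fin n)) := Finset.univ.powersetCard i with hP
  set E : Finset (Fin n) → Set Ω :=
    fun S => ⋂ k ∈ S, ⋂ j ∈ S, {ω | dist (X k ω) (X j ω) ≤ R} with hE
  have hEmeas : ∀ S : Finset (Fin n), MeasurableSet (E S) := by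
    intro S
    refine MeasurableSet.iInter fun k => MeasurableSet.iInter fun _ =>
      MeasurableSet.iInter fun j => MeasurableSet.iInter fun _ => ?_
    exact measurableSet_le ((hmeas k).dist (hmeas j)) measurable_const
  set B : ENNReal := ENNReal.ofReal Mf * (ENNReal.ofReal (R ^ d) * θ) with hB
  -- the probability bound for each S
  have hprob : ∀ S ∈ P, μ (E S) ≤ B ^ (i - 1) := by
    intro S hSP
    have hScard : S.card = i := (Finset.mem_powersetCard_univ).mp hSP
    have hSne : S.Nonempty := Finset.card_pos.mp (by omega)
    set j0 := S.min' hSne with hj0def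
    have hj0 : j0 ∈ S := S.min'_mem hSne
    set T : Finset (Fin n) := S.erase j0 with hT
    have hTcard : T.card = i - 1 := by rw [hT, Finset.card_erase_of_mem hj0, hScard]
    set ν0 : Measure (EuclideanSpace ℝ (Fin d)) :=
      volume.withDensity fun x => ENNReal.ofReal (f x) with hν0
    haveI : IsProbabilityMeasure ν0 := by
      rw [← hlaw j0]; exact Measure.isProbabilityMeasure_map (hmeas j0).aemeasurable
    set g : Ω → ((T : Set (Fin n)).Elem → EuclideanSpace ℝ (Fin d)) :=
      fun ω k => X k ω with hg'
    have hg : Measurable g := measurable_pi_lambda _ fun k => hmeas k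
    set C : Set ((EuclideanSpace ℝ (Fin d)) × ((T : Set (Fin n)).Elem → EuclideanSpace ℝ (Fin d))) :=
      {p | ∀ k : (T : Set (Fin n)).Elem, dist (p.2 k) p.1 ≤ R} with hCdef
    have hC : MeasurableSet C := by
      have : C = ⋂ k : (T : Set (Fin n)).Elem, {p : (EuclideanSpace ℝ (Fin d)) × ((T : Set (Fin n)).Elem → EuclideanSpace ℝ (Fin d)) | dist (p.2 k) p.1 ≤ R} := by
        ext p; simp [hCdef, Set.mem_iInter]
      rw [this]
      refine MeasurableSet.iInter fun k => ?_
      apply measurableSet_le _ measurable_const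
      · fun_prop
    have hsub : E S ⊆ (fun ω => (X j0 ω, g ω)) ⁻¹' C := by
      intro ω hω
      simp only [hE, Set.mem_iInter, Set.mem_setOf_eq] at hω
      intro k
      exact hω k (Finset.mem_of_mem_erase k.2) j0 hj0
    refine le_trans (measure_mono hsub) ?_
    have hIndep : ProbabilityTheory.IndepFun (X j0) g μ := by
      have h1 := hindep.indepFun_finset {j0} T
        (by simp [hT, Finset.disjoint_singleton_left]) hmeas
      have h2 := h1.comp
        (measurable_pi_apply (⟨j0, Finset.mem_singleton_self j0⟩ : (({j0} : Finset (Fin n)) : Set (Fin n)).Elem))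
        (measurable_id (α := ((T : Set (Fin n)).Elem → EuclideanSpace ℝ (Fin d))))
      exact h2
    have hmap : μ.map (fun ω => (X j0 ω, g ω)) = (μ.map (X j0)).prod (μ.map g) :=
      (ProbabilityTheory.indepFun_iff_map_prod_eq_prod_map_map (hmeas j0).aemeasurable
        hg.aemeasurable).mp hIndep
    haveI : IsProbabilityMeasure (μ.map g) := Measure.isProbabilityMeasure_map hg.aemeasurable
    haveI : IsProbabilityMeasure (μ.map (X j0)) := Measure.isProbabilityMeasure_map (hmeas j0).aemeasurable
    have key : ∀ x : EuclideanSpace ℝ (Fin d), μ.map g (Prod.mk x ⁻¹' C) ≤ B ^ (i - 1) := by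
      intro x
      have hball : ν0 (closedBall x R) ≤ B := by
        rw [hν0, withDensity_apply _ measurableSet_closedBall]
        calc ∫⁻ y in closedBall x R, ENNReal.ofReal (f y) ∂volume
            ≤ ∫⁻ _ in closedBall x R, ENNReal.ofReal Mf ∂volume :=
              lintegral_mono fun y => ENNReal.ofReal_le_ofReal (hfM y)
          _ = ENNReal.ofReal Mf * volume (closedBall x R) := setLIntegral_const _ _
          _ = B := by
              rw [hB, Measure.addHaar_closedBall volume x hR0.le, finrank_euclideanSpace_fin, hθ]
      have hpre : g ⁻¹' (Prod.mk x ⁻¹' C) = ⋂ k ∈ T, X k ⁻¹' (closedBall x R) := by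
        ext ω
        simp only [Set.mem_preimage, Set.mem_iInter, hCdef, Set.mem_setOf_eq, hg',
          Metric.mem_closedBall, Subtype.forall]
        constructor
        · intro h k hk; exact h k hk
        · intro h k hk; exact h k hk
      rw [Measure.map_apply hg (measurable_prodMk_left hC), hpre,
        hindep.measure_inter_preimage_eq_mul T (sets := fun _ => closedBall x R)
          (fun k _ => measurableSet_closedBall)]
      calc ∏ k ∈ T, μ (X k ⁻¹' closedBall x R)
          = ∏ _k ∈ T, ν0 (closedBall x R) := by
            refine Finset.prod_congr rfl fun k _ => ?_
            rw [← Measure.map_apply (hmeas k) measurableSet_closedBall, hlaw k, hν0]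
        _ = ν0 (closedBall x R) ^ (i - 1) := by rw [Finset.prod_const, hTcard]
        _ ≤ B ^ (i - 1) := pow_le_pow_left' hball _
    calc μ ((fun ω => (X j0 ω, g ω)) ⁻¹' C)
        = ((μ.map (X j0)).prod (μ.map g)) C := by
          rw [← hmap, Measure.map_apply ((hmeas j0).prodMk hg) hC]
      _ = ∫⁻ x, μ.map g (Prod.mk x ⁻¹' C) ∂(μ.map (X j0)) := Measure.prod_apply hC
      _ ≤ ∫⁻ _, B ^ (i - 1) ∂(μ.map (X j0)) := lintegral_mono key
      _ = B ^ (i - 1) := by simp [lintegral_const, measure_univ]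
  -- pointwise bound
  have hpt : ∀ ω, (connCount i r (fun j => X j ω) : ℝ)
      ≤ ∑ S ∈ P, (E S).indicator (fun _ => (1 : ℝ)) ω := by
    intro ω
    have hmono : ∀ S ∈ P,
        ((geomGraph r (fun j => X j ω)).induce (S : Set (Fin n))).Connected → ω ∈ E S := by
      intro S hSP hconn
      have hScard := (Finset.mem_powersetCard_univ).mp hSP
      simp only [hE, Set.mem_iInter, Set.mem_setOf_eq]
      intro k hk j hj
      exact connected_dist_le hr.le _ S hScard hconn hk hj
    unfold connCount
    rw [Finset.filter_congr_decidable]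
    set F := Finset.filter
      (fun S : Finset (Fin n) =>
        ((geomGraph r fun j => X j ω).induce (S : Set (Fin n))).Connected)
      (Finset.univ.powersetCard i) with hF
    have hone : ∀ S ∈ F, (E S).indicator (fun _ => (1 : ℝ)) ω = 1 := by
      intro S hS
      rw [hF, Finset.mem_filter] at hS
      exact Set.indicator_of_mem (hmono S (by rw [hP]; exact hS.1) hS.2) _
    calc (F.card : ℝ)
        = ∑ S ∈ F, (E S).indicator (fun _ => (1 : ℝ)) ω := by
          rw [Finset.sum_congr rfl hone, Finset.sum_const, nsmul_eq_mul, mul_one]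
      _ ≤ ∑ S ∈ P, (E S).indicator (fun _ => (1 : ℝ)) ω := by
          refine Finset.sum_le_sum_of_subset_of_nonneg ?_ ?_
          · rw [hF, hP]; exact Finset.filter_subset _ _
          · intro S _ _
            exact Set.indicator_nonneg (fun _ _ => zero_le_one) _
  have hint : ∀ S : Finset (Fin n), Integrable ((E S).indicator (fun _ => (1 : ℝ))) μ :=
    fun S => (integrable_const (1 : ℝ)).indicator (hEmeas S)
  have h1 : (∫ ω, (connCount i r (fun j => X j ω) : ℝ) ∂μ) ≤ ∑ S ∈ P, (μ (E S)).toReal := by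
    calc (∫ ω, (connCount i r (fun j => X j ω) : ℝ) ∂μ)
        ≤ ∫ ω, (∑ S ∈ P, (E S).indicator (fun _ => (1 : ℝ)) ω) ∂μ := by
          refine integral_mono_of_nonneg (Filter.Eventually.of_forall fun ω => by positivity)
            (integrable_finset_sum _ fun S _ => hint S) (Filter.Eventually.of_forall hpt)
      _ = ∑ S ∈ P, ∫ ω, (E S).indicator (fun _ => (1 : ℝ)) ω ∂μ :=
          integral_finset_sum _ fun S _ => hint S
      _ = ∑ S ∈ P, (μ (E S)).toReal := by
          refine Finset.sum_congr rfl fun S _ => ?_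
          rw [integral_indicator_const (1 : ℝ) (hEmeas S), smul_eq_mul, mul_one, measureReal_def]
  -- toReal of the bound
  have hθfin : θ ≠ ⊤ := measure_ball_lt_top.ne
  have hBfin : B ≠ ⊤ := by
    rw [hB]
    exact ENNReal.mul_ne_top ENNReal.ofReal_ne_top (ENNReal.mul_ne_top ENNReal.ofReal_ne_top hθfin)
  have hBtoReal : B.toReal = Mf * θ.toReal * R ^ d := by
    rw [hB, ENNReal.toReal_mul, ENNReal.toReal_mul, ENNReal.toReal_ofReal hMf0,
      ENNReal.toReal_ofReal (by positivity)]
    ring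
  have h2 : ∀ S ∈ P, (μ (E S)).toReal ≤ (Mf * θ.toReal * R ^ d) ^ (i - 1) := by
    intro S hS
    have := ENNReal.toReal_mono (by exact ENNReal.pow_ne_top hBfin) (hprob S hS)
    rwa [ENNReal.toReal_pow, hBtoReal] at this
  have hb0 : 0 ≤ (Mf * θ.toReal * R ^ d) ^ (i - 1) :=
    pow_nonneg (mul_nonneg (mul_nonneg hMf0 ENNReal.toReal_nonneg) (by positivity)) _
  have hsum : ∑ S ∈ P, (μ (E S)).toReal
      ≤ (n.choose i : ℝ) * (Mf * θ.toReal * R ^ d) ^ (i - 1) := by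
    calc ∑ S ∈ P, (μ (E S)).toReal ≤ ∑ _S ∈ P, (Mf * θ.toReal * R ^ d) ^ (i - 1) :=
        Finset.sum_le_sum h2
      _ = (P.card : ℝ) * (Mf * θ.toReal * R ^ d) ^ (i - 1) := by
          rw [Finset.sum_const, nsmul_eq_mul]
      _ = (n.choose i : ℝ) * (Mf * θ.toReal * R ^ d) ^ (i - 1) := by
          rw [hP, Finset.card_powersetCard, Finset.card_univ, Fintype.card_fin]
  have honez : (1 : ℝ) ≤ (i : ℝ) ^ ((i : ℤ) - 2) := by
    rcases eq_or_lt_of_le hi with h1' | h2'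
    · rw [← h1']; norm_num
    · have hcast : ((i : ℤ) - 2) = ((i - 2 : ℕ) : ℤ) := by omega
      rw [hcast, zpow_natCast]
      exact one_le_pow₀ (by exact_mod_cast hi)
  refine h1.trans (hsum.trans ?_)
  calc (n.choose i : ℝ) * (Mf * θ.toReal * R ^ d) ^ (i - 1)
      = (n.choose i : ℝ) * (1 * (Mf * θ.toReal * R ^ d) ^ (i - 1)) := by ring
    _ ≤ (n.choose i : ℝ) * ((i : ℝ) ^ ((i : ℤ) - 2) * (Mf * θ.toReal * R ^ d) ^ (i - 1)) := by
        exact mul_le_mul_of_nonneg_left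
          (mul_le_mul_of_nonneg_right honez hb0) (Nat.cast_nonneg _)
    _ = (n.choose i : ℝ) * (i : ℝ) ^ ((i : ℤ) - 2) *
        (Mf * θ.toReal * R ^ d) ^ (i - 1) := by ring
end

section
/- Cayley's formula: the number of labeled trees on i ≥ 1 vertices equals i^{i-2}. -/
set_option linter.unusedSectionVars false
set_option maxHeartbeats 1600000
open Function
section Dyn
variable {V : Type*} [Fintype V] [DecidableEq V]

/-- `p` is the parent function of a tree rooted at `r`. -/
def IsArb (p : V → V) (r : V) : Prop :=
  p r = r ∧ ∀ v, p^[Fintype.card V] v = r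

theorem IsArb.iterate_ge {p : V → V} {r : V} (h : IsArb p r) {k : ℕ}
    (hk : Fintype.card V ≤ k) (v : V) : p^[k] v = r := by
  have : k = (k - Fintype.card V) + Fintype.card V := by omega
  rw [this, Function.iterate_add_apply, h.2 v, Function.iterate_fixed h.1]

theorem iterate_mul_self {p : V → V} {v : V} {k : ℕ} (h : p^[k] v = v) :
    ∀ m, p^[m * k] v = v := by
  intro m
  induction m with
  | zero => simp
  | succ n ih => rw [Nat.succ_mul, Function.iterate_add_apply, h, ih]

theorem IsArb.eq_root_of_periodic {p : V → V} {r : V} (h : IsArb p r) {v : V} {k : ℕ}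
    (hk : 1 ≤ k) (hv : p^[k] v = v) : v = r := by
  have h1 : p^[Fintype.card V * k] v = v := iterate_mul_self hv _
  have h2 : Fintype.card V ≤ Fintype.card V * k := Nat.le_mul_of_pos_right _ hk
  rw [h.iterate_ge h2 v] at h1
  exact h1.symm

/-- pigeonhole: some early repeat in the trajectory. -/
theorem exists_iterate_eq_iterate (p : V → V) (v : V) :
    ∃ i j, i < j ∧ j ≤ Fintype.card V ∧ p^[i] v = p^[j] v := by
  have : ¬ Function.Injective (fun i : Fin (Fintype.card V + 1) => p^[(i : ℕ)] v) := by
    intro hinj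
    have := Fintype.card_le_of_injective _ hinj
    simp at this
  simp only [Function.Injective, not_forall] at this
  obtain ⟨i, j, hij, hne⟩ := this
  have hne' : (i : ℕ) ≠ (j : ℕ) := fun h => hne (Fin.ext h)
  rcases lt_or_gt_of_ne hne' with h | h
  · exact ⟨i, j, h, by omega, hij⟩
  · exact ⟨j, i, h, by omega, hij.symm⟩

theorem exists_periodic (p : V → V) (v : V) :
    ∃ w k, 1 ≤ k ∧ p^[k] w = w ∧ ∃ i, w = p^[i] v := by
  obtain ⟨i, j, hij, _, heq⟩ := exists_iterate_eq_iterate p v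
  refine ⟨p^[i] v, j - i, by omega, ?_, i, rfl⟩
  rw [← Function.iterate_add_apply, Nat.sub_add_cancel hij.le, ← heq]

theorem isArb_of_unique_periodic {p : V → V} {r : V} (h0 : p r = r)
    (h : ∀ v k, 1 ≤ k → p^[k] v = v → v = r) : IsArb p r := by
  refine ⟨h0, fun v => ?_⟩
  obtain ⟨i, j, hij, hj, heq⟩ := exists_iterate_eq_iterate p v
  have hper : p^[j - i] (p^[i] v) = p^[i] v := by
    rw [← Function.iterate_add_apply, Nat.sub_add_cancel hij.le, ← heq]
  have hw : p^[i] v = r := h _ _ (by omega) hper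
  have : Fintype.card V = (Fintype.card V - i) + i := by omega
  rw [this, Function.iterate_add_apply, hw, Function.iterate_fixed h0]

/-- depth of `v`: number of steps to reach the root. -/
noncomputable def dep {p : V → V} {r : V} (h : IsArb p r) (v : V) : ℕ :=
  Nat.find (⟨Fintype.card V, h.2 v⟩ : ∃ k, p^[k] v = r)

theorem dep_spec {p : V → V} {r : V} (h : IsArb p r) (v : V) : p^[dep h v] v = r := by
  unfold dep; exact Nat.find_spec (⟨Fintype.card V, h.2 v⟩ : ∃ k, p^[k] v = r)

theorem dep_le_of {p : V → V} {r : V} (h : IsArb p r) {v : V} {k : ℕ} (hk : p^[k] v = r) :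
    dep h v ≤ k := Nat.find_le hk

theorem dep_le_card {p : V → V} {r : V} (h : IsArb p r) (v : V) :
    dep h v ≤ Fintype.card V := dep_le_of h (h.2 v)

@[simp] theorem dep_root {p : V → V} {r : V} (h : IsArb p r) : dep h r = 0 :=
  Nat.le_zero.mp (dep_le_of h (by simp))

theorem dep_eq_zero_iff {p : V → V} {r : V} (h : IsArb p r) {v : V} :
    dep h v = 0 ↔ v = r := by
  constructor
  · intro h0
    have := dep_spec h v
    rwa [h0, Function.iterate_zero_apply] at this
  · rintro rfl; exact dep_root h

theorem dep_iterate {p : V → V} {r : V} (h : IsArb p r) {v : V} {i : ℕ}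
    (hi : i ≤ dep h v) : dep h (p^[i] v) = dep h v - i := by
  have hle : dep h (p^[i] v) ≤ dep h v - i := by
    apply dep_le_of
    rw [← Function.iterate_add_apply, Nat.sub_add_cancel hi, dep_spec]
  have hge : dep h v ≤ dep h (p^[i] v) + i := by
    apply dep_le_of
    rw [Function.iterate_add_apply, dep_spec]
  omega

theorem dep_apply {p : V → V} {r : V} (h : IsArb p r) {v : V} (hv : v ≠ r) :
    dep h (p v) = dep h v - 1 := by
  have h1 : 1 ≤ dep h v := by
    rcases Nat.eq_zero_or_pos (dep h v) with h0 | h0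
    · exact absurd ((dep_eq_zero_iff h).mp h0) hv
    · exact h0
  simpa using dep_iterate h (i := 1) h1

theorem dep_pos {p : V → V} {r : V} (h : IsArb p r) {v : V} (hv : v ≠ r) : 1 ≤ dep h v := by
  rcases Nat.eq_zero_or_pos (dep h v) with h0 | h0
  · exact absurd ((dep_eq_zero_iff h).mp h0) hv
  · exact h0

/-- trajectory injectivity up to the depth. -/
theorem traj_injOn {p : V → V} {r : V} (h : IsArb p r) {v : V} {i j : ℕ}
    (hi : i ≤ dep h v) (hj : j ≤ dep h v) (heq : p^[i] v = p^[j] v) : i = j := by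
  have h1 := dep_iterate h hi
  have h2 := dep_iterate h hj
  rw [heq, h2] at h1
  omega

theorem iterate_mem_of_closed {f : V → V} {S : Finset V} (hS : ∀ v ∈ S, f v ∈ S) {v : V}
    (hv : v ∈ S) (k : ℕ) : f^[k] v ∈ S := by
  induction k with
  | zero => simpa
  | succ n ih => rw [Function.iterate_succ_apply']; exact hS _ ih

theorem injOn_iterate_cancel {f : V → V} {S : Finset V} (hS : ∀ v ∈ S, f v ∈ S)
    (hinj : Set.InjOn f ↑S) : ∀ (k : ℕ) (x y : V), x ∈ S → y ∈ S → f^[k] x = f^[k] y → x = y := by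
  intro k
  induction k with
  | zero => intro x y _ _ h; simpa using h
  | succ n ih =>
    intro x y hx hy h
    rw [Function.iterate_succ_apply, Function.iterate_succ_apply] at h
    exact hinj hx hy (ih _ _ (hS _ hx) (hS _ hy) h)

theorem exists_iterate_self_of_injOn {f : V → V} {S : Finset V} (hS : ∀ v ∈ S, f v ∈ S)
    (hinj : Set.InjOn f ↑S) {v : V} (hv : v ∈ S) : ∃ k, 1 ≤ k ∧ f^[k] v = v := by
  obtain ⟨i, j, hij, hj, heq⟩ := exists_iterate_eq_iterate f v
  refine ⟨j - i, by omega, ?_⟩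
  have h2 : f^[i] (f^[j-i] v) = f^[i] v := by
    rw [← Function.iterate_add_apply]
    rw [show i + (j - i) = j by omega, heq]
  exact injOn_iterate_cancel hS hinj i _ _ (iterate_mem_of_closed hS hv _) hv h2

theorem exists_small_period {f : V → V} {v : V} {k : ℕ} (hk : 1 ≤ k) (h : f^[k] v = v) :
    ∃ k', 1 ≤ k' ∧ k' ≤ Fintype.card V ∧ f^[k'] v = v := by
  obtain ⟨i, j, hij, hjle, heq⟩ := exists_iterate_eq_iterate f v
  have hmk : f^[i*k] v = v := iterate_mul_self h i
  have h1 : f^[j-i] v = v := by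
    calc f^[j-i] v = f^[j-i] (f^[i*k] v) := by rw [hmk]
    _ = f^[(i*k - i) + j] v := by
        rw [← Function.iterate_add_apply]; congr 1
        have : i ≤ i * k := Nat.le_mul_of_pos_right _ hk
        omega
    _ = f^[i*k - i] (f^[j] v) := by rw [Function.iterate_add_apply]
    _ = f^[i*k - i] (f^[i] v) := by rw [heq]
    _ = f^[i*k] v := by
        rw [← Function.iterate_add_apply]; congr 1
        have : i ≤ i * k := Nat.le_mul_of_pos_right _ hk
        omega
    _ = v := hmk
  exact ⟨j - i, by omega, by omega, h1⟩

open scoped Classical in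
/-- the finset of periodic points of `f`. -/
noncomputable def perF (f : V → V) : Finset V :=
  Finset.univ.filter (fun v => ∃ k ∈ Finset.Icc 1 (Fintype.card V), f^[k] v = v)

theorem mem_perF {f : V → V} {v : V} : v ∈ perF f ↔ ∃ k, 1 ≤ k ∧ f^[k] v = v := by
  classical
  simp only [perF, Finset.mem_filter, Finset.mem_univ, true_and, Finset.mem_Icc]
  constructor
  · rintro ⟨k, ⟨h1, _⟩, h3⟩; exact ⟨k, h1, h3⟩
  · rintro ⟨k, h1, h2⟩
    obtain ⟨k', a, b, c⟩ := exists_small_period h1 h2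
    exact ⟨k', ⟨a, b⟩, c⟩

theorem perF_closed {f : V → V} {v : V} (hv : v ∈ perF f) : f v ∈ perF f := by
  rw [mem_perF] at hv ⊢
  obtain ⟨k, hk, h⟩ := hv
  exact ⟨k, hk, by rw [← Function.iterate_succ_apply, Function.iterate_succ_apply', h]⟩

theorem perF_surj {f : V → V} {v : V} (hv : v ∈ perF f) : ∃ u ∈ perF f, f u = v := by
  rw [mem_perF] at hv
  obtain ⟨k, hk, h⟩ := hv
  refine ⟨f^[k-1] v, ?_, ?_⟩
  · rw [mem_perF]
    refine ⟨k, hk, ?_⟩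
    rw [← Function.iterate_add_apply, Nat.add_comm, Function.iterate_add_apply, h]
  · rw [← Function.iterate_succ_apply' f (k-1) v, show (k-1).succ = k by omega, h]

theorem perF_image {f : V → V} : (perF f).image f = perF f := by
  apply Finset.Subset.antisymm
  · intro v hv
    simp only [Finset.mem_image] at hv
    obtain ⟨u, hu, rfl⟩ := hv
    exact perF_closed hu
  · intro v hv
    obtain ⟨u, hu, h⟩ := perF_surj hv
    exact Finset.mem_image.mpr ⟨u, hu, h⟩

theorem perF_injOn {f : V → V} : Set.InjOn f ↑(perF f) := by
  apply Finset.injOn_of_card_image_eq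
  rw [perF_image]

theorem iterate_card_mem_perF (f : V → V) (v : V) : f^[Fintype.card V] v ∈ perF f := by
  obtain ⟨i, j, hij, hjle, heq⟩ := exists_iterate_eq_iterate f v
  have h1 : f^[i] v ∈ perF f := by
    rw [mem_perF]
    refine ⟨j - i, by omega, ?_⟩
    rw [← Function.iterate_add_apply, show j - i + i = j by omega, heq]
  have := iterate_mem_of_closed (fun _ h => perF_closed h) h1 (Fintype.card V - i)
  rwa [← Function.iterate_add_apply, show Fintype.card V - i + i = Fintype.card V by omega] at this

theorem perF_nonempty [Nonempty V] (f : V → V) : (perF f).Nonempty :=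
  ⟨_, iterate_card_mem_perF f (Classical.arbitrary V)⟩

end Dyn
section Joyal
variable {V : Type*} [Fintype V] [LinearOrder V]

/-- the trajectory of `a` as a finset. -/
noncomputable def orbitF {p : V → V} {r : V} (h : IsArb p r) (a : V) : Finset V :=
  (Finset.range (dep h a + 1)).image (fun i => p^[i] a)

theorem mem_orbitF {p : V → V} {r : V} {h : IsArb p r} {a v : V} :
    v ∈ orbitF h a ↔ ∃ i, i ≤ dep h a ∧ p^[i] a = v := by
  simp [orbitF, Nat.lt_succ_iff]

theorem root_mem_orbitF {p : V → V} {r : V} (h : IsArb p r) (a : V) : r ∈ orbitF h a :=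
  mem_orbitF.mpr ⟨dep h a, le_rfl, dep_spec h a⟩

theorem self_mem_orbitF {p : V → V} {r : V} (h : IsArb p r) (a : V) : a ∈ orbitF h a :=
  mem_orbitF.mpr ⟨0, by omega, rfl⟩

theorem card_orbitF {p : V → V} {r : V} (h : IsArb p r) (a : V) :
    (orbitF h a).card = dep h a + 1 := by
  rw [orbitF, Finset.card_image_of_injOn, Finset.card_range]
  intro i hi j hj hij
  simp only [Finset.coe_range, Set.mem_Iio, Nat.lt_succ_iff] at hi hj
  exact traj_injOn h hi hj hij

/-- the Joyal encoding of a doubly rooted tree as a function. -/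
noncomputable def joyal {p : V → V} {r : V} (h : IsArb p r) (a : V) : V → V := fun v =>
  if v ∈ orbitF h a then p^[(Finset.sort (orbitF h a) (· ≤ ·)).idxOf v] a else p v

theorem joyal_not_mem {p : V → V} {r : V} (h : IsArb p r) {a v : V} (hv : v ∉ orbitF h a) :
    joyal h a v = p v := by rw [joyal, if_neg hv]

theorem joyal_mem {p : V → V} {r : V} (h : IsArb p r) {a v : V} (hv : v ∈ orbitF h a) :
    joyal h a v = p^[(Finset.sort (orbitF h a) (· ≤ ·)).idxOf v] a := by rw [joyal, if_pos hv]

theorem indexOf_le_dep {p : V → V} {r : V} (h : IsArb p r) {a v : V} (hv : v ∈ orbitF h a) :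
    (Finset.sort (orbitF h a) (· ≤ ·)).idxOf v ≤ dep h a := by
  have h1 : (Finset.sort (orbitF h a) (· ≤ ·)).idxOf v
      < (Finset.sort (orbitF h a) (· ≤ ·)).length :=
    List.idxOf_lt_length_iff.mpr ((Finset.mem_sort _).mpr hv)
  rw [Finset.length_sort, card_orbitF] at h1
  omega

theorem joyal_mem_closed {p : V → V} {r : V} (h : IsArb p r) {a v : V} (hv : v ∈ orbitF h a) :
    joyal h a v ∈ orbitF h a := by
  rw [joyal_mem h hv]
  exact mem_orbitF.mpr ⟨_, indexOf_le_dep h hv, rfl⟩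

theorem joyal_injOn {p : V → V} {r : V} (h : IsArb p r) (a : V) :
    Set.InjOn (joyal h a) ↑(orbitF h a) := by
  intro v hv w hw heq
  simp only [Finset.mem_coe] at hv hw
  rw [joyal_mem h hv, joyal_mem h hw] at heq
  have := traj_injOn h (indexOf_le_dep h hv) (indexOf_le_dep h hw) heq
  exact (List.idxOf_inj ((Finset.mem_sort _).mpr hv)).mp this

theorem joyal_iter_mem {p : V → V} {r : V} (h : IsArb p r) (a : V) :
    ∀ (k : ℕ) (v : V), dep h v ≤ k → (joyal h a)^[k] v ∈ orbitF h a := by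
  intro k
  induction k with
  | zero =>
    intro v hv
    have : v = r := (dep_eq_zero_iff h).mp (by omega)
    subst this
    simpa using root_mem_orbitF h a
  | succ n ih =>
    intro v hv
    by_cases hm : v ∈ orbitF h a
    · exact iterate_mem_of_closed (fun _ hw => joyal_mem_closed h hw) hm _
    · have hvr : v ≠ r := fun hh => hm (hh ▸ root_mem_orbitF h a)
      rw [Function.iterate_succ_apply, joyal_not_mem h hm]
      apply ih
      rw [dep_apply h hvr]
      have := dep_pos h hvr
      omega

theorem perF_joyal {p : V → V} {r : V} (h : IsArb p r) (a : V) :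
    perF (joyal h a) = orbitF h a := by
  apply Finset.Subset.antisymm
  · intro v hv
    rw [mem_perF] at hv
    obtain ⟨k, hk, hper⟩ := hv
    have h1 : (joyal h a)^[Fintype.card V * k] v = v := iterate_mul_self hper _
    have h2 : dep h v ≤ Fintype.card V * k := by
      have := dep_le_card h v
      have : Fintype.card V ≤ Fintype.card V * k := Nat.le_mul_of_pos_right _ hk
      omega
    rw [← h1]
    exact joyal_iter_mem h a _ v h2
  · intro v hv
    rw [mem_perF]
    exact exists_iterate_self_of_injOn (fun _ hw => joyal_mem_closed h hw) (joyal_injOn h a) hv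

end Joyal

section Back
variable {V : Type*} [Fintype V] [LinearOrder V] [Nonempty V]

/-- sorted list of periodic points. -/
noncomputable def spineL (f : V → V) : List V := Finset.sort (perF f) (· ≤ ·)

/-- the spine (path from anchor to root) in path order. -/
noncomputable def spineC (f : V → V) (i : ℕ) : V :=
  f ((spineL f).getD i (Classical.arbitrary V))

/-- root of the decoded doubly-rooted tree. -/
noncomputable def rootOf (f : V → V) : V := spineC f ((spineL f).length - 1)

/-- the Joyal decoding: parent function of the decoded tree. -/
noncomputable def dejoyal (f : V → V) : V → V := fun v =>
  if v ∈ perF f then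
    (if (spineL f).idxOf (Function.invFunOn f ↑(perF f) v) + 1 ≤ (spineL f).length - 1
     then spineC f ((spineL f).idxOf (Function.invFunOn f ↑(perF f) v) + 1) else v)
  else f v

theorem length_spineL_pos (f : V → V) : 0 < (spineL f).length := by
  rw [spineL, Finset.length_sort]
  exact Finset.card_pos.mpr (perF_nonempty f)

theorem mem_spineL {f : V → V} {v : V} : v ∈ spineL f ↔ v ∈ perF f := Finset.mem_sort _

theorem getD_spineL_mem {f : V → V} {i : ℕ} (hi : i < (spineL f).length) :
    (spineL f).getD i (Classical.arbitrary V) ∈ perF f := by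
  rw [List.getD_eq_getElem _ _ hi]
  exact mem_spineL.mp (List.getElem_mem _)

theorem spineC_mem {f : V → V} {i : ℕ} (hi : i < (spineL f).length) :
    spineC f i ∈ perF f := perF_closed (getD_spineL_mem hi)

theorem spineC_inj {f : V → V} {i j : ℕ} (hi : i < (spineL f).length)
    (hj : j < (spineL f).length) (h : spineC f i = spineC f j) : i = j := by
  rw [spineC, spineC, List.getD_eq_getElem _ _ hi, List.getD_eq_getElem _ _ hj] at h
  have h2 := perF_injOn (Finset.mem_coe.mpr (mem_spineL.mp (List.getElem_mem _)))
    (Finset.mem_coe.mpr (mem_spineL.mp (List.getElem_mem _))) h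
  have h3 := List.Nodup.idxOf_getElem (Finset.sort_nodup (perF f) (· ≤ ·)) i hi
  have h4 := List.Nodup.idxOf_getElem (Finset.sort_nodup (perF f) (· ≤ ·)) j hj
  rw [← h3, ← h4]
  exact congrArg (fun x => List.idxOf x (spineL f)) h2

theorem spineC_surj {f : V → V} {v : V} (hv : v ∈ perF f) :
    ∃ i, i < (spineL f).length ∧ spineC f i = v := by
  obtain ⟨u, hu, huv⟩ := perF_surj hv
  have hmem : u ∈ spineL f := mem_spineL.mpr hu
  have hlt : (spineL f).idxOf u < (spineL f).length := List.idxOf_lt_length_iff.mpr hmem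
  refine ⟨(spineL f).idxOf u, hlt, ?_⟩
  rw [spineC, List.getD_eq_getElem _ _ hlt, List.getElem_idxOf hlt, huv]

theorem invFunOn_spineC {f : V → V} {i : ℕ} (hi : i < (spineL f).length) :
    Function.invFunOn f ↑(perF f) (spineC f i) = (spineL f).getD i (Classical.arbitrary V) := by
  have hex : ∃ u ∈ (↑(perF f) : Set V), f u = spineC f i :=
    ⟨_, Finset.mem_coe.mpr (getD_spineL_mem hi), rfl⟩
  have h1 := Function.invFunOn_mem hex
  have h2 := Function.invFunOn_eq hex
  exact perF_injOn h1 (Finset.mem_coe.mpr (getD_spineL_mem hi)) h2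

theorem indexOf_invFunOn_spineC {f : V → V} {i : ℕ} (hi : i < (spineL f).length) :
    (spineL f).idxOf (Function.invFunOn f ↑(perF f) (spineC f i)) = i := by
  rw [invFunOn_spineC hi, List.getD_eq_getElem _ _ hi]
  exact List.Nodup.idxOf_getElem (Finset.sort_nodup _ _) i hi

theorem dejoyal_spineC {f : V → V} {i : ℕ} (hi : i + 1 < (spineL f).length) :
    dejoyal f (spineC f i) = spineC f (i + 1) := by
  rw [dejoyal, if_pos (spineC_mem (by omega)), indexOf_invFunOn_spineC (by omega),
    if_pos (by omega)]

theorem dejoyal_spineC_last (f : V → V) :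
    dejoyal f (spineC f ((spineL f).length - 1)) = spineC f ((spineL f).length - 1) := by
  have h0 := length_spineL_pos f
  rw [dejoyal, if_pos (spineC_mem (by omega)), indexOf_invFunOn_spineC (by omega),
    if_neg (by omega)]

theorem dejoyal_not_mem {f : V → V} {v : V} (hv : v ∉ perF f) : dejoyal f v = f v := by
  rw [dejoyal, if_neg hv]

theorem dejoyal_mem_closed {f : V → V} {v : V} (hv : v ∈ perF f) : dejoyal f v ∈ perF f := by
  obtain ⟨i, hi, rfl⟩ := spineC_surj hv
  by_cases h1 : i + 1 < (spineL f).length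
  · rw [dejoyal_spineC h1]; exact spineC_mem h1
  · have h0 := length_spineL_pos f
    have : i = (spineL f).length - 1 := by omega
    subst this
    rw [dejoyal_spineC_last]; exact spineC_mem (by omega)

theorem dejoyal_iter_spineC (f : V → V) (t : ℕ) {i : ℕ} (hi : i < (spineL f).length) :
    (dejoyal f)^[t] (spineC f i) = spineC f (min (i + t) ((spineL f).length - 1)) := by
  induction t with
  | zero => simp; congr 1; omega
  | succ n ih =>
    rw [Function.iterate_succ_apply', ih]
    by_cases h1 : i + n < (spineL f).length - 1
    · rw [min_eq_left (by omega), dejoyal_spineC (by omega)]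
      congr 1; omega
    · rw [min_eq_right (by omega), dejoyal_spineC_last]
      congr 1; omega

theorem isArb_dejoyal (f : V → V) : IsArb (dejoyal f) (rootOf f) := by
  have h0 := length_spineL_pos f
  apply isArb_of_unique_periodic
  · exact dejoyal_spineC_last f
  · intro w k hk hper
    by_cases hw : w ∈ perF f
    · obtain ⟨i, hi, rfl⟩ := spineC_surj hw
      have h1 : (dejoyal f)^[(spineL f).length * k] (spineC f i) = spineC f i :=
        iterate_mul_self hper _
      rw [dejoyal_iter_spineC f _ hi] at h1
      have hmk : (spineL f).length ≤ (spineL f).length * k := Nat.le_mul_of_pos_right _ hk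
      rw [min_eq_right (by omega)] at h1
      rw [rootOf, ← h1]
    · exfalso
      have h1 : ∀ t, (dejoyal f)^[t] w ∉ perF f := by
        intro t ht
        have h2 : ∀ s, (dejoyal f)^[t + s] w ∈ perF f := fun s => by
          rw [Nat.add_comm, Function.iterate_add_apply]
          exact iterate_mem_of_closed (fun _ hv => dejoyal_mem_closed hv) ht _
        have h3 : (dejoyal f)^[(t + 1) * k] w = w := iterate_mul_self hper _
        have h4 : t + ((t+1) * k - t) = (t+1) * k := by
          have : t + 1 ≤ (t+1) * k := Nat.le_mul_of_pos_right _ hk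
          omega
        have := h2 ((t+1) * k - t)
        rw [h4, h3] at this
        exact hw this
      have h2 : ∀ t, (dejoyal f)^[t] w = f^[t] w := by
        intro t
        induction t with
        | zero => rfl
        | succ n ih =>
          rw [Function.iterate_succ_apply', Function.iterate_succ_apply', ih,
            dejoyal_not_mem (by rw [← ih]; exact h1 n)]
      have h3 := iterate_card_mem_perF f w
      rw [← h2] at h3
      exact h1 _ h3

end Back

section RT
variable {V : Type*} [Fintype V] [LinearOrder V] [Nonempty V]

theorem spineL_joyal {p : V → V} {r : V} (h : IsArb p r) (a : V) :
    spineL (joyal h a) = Finset.sort (orbitF h a) (· ≤ ·) := by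
  rw [spineL, perF_joyal]

theorem length_spineL_joyal {p : V → V} {r : V} (h : IsArb p r) (a : V) :
    (spineL (joyal h a)).length = dep h a + 1 := by
  rw [spineL_joyal, Finset.length_sort, card_orbitF]

theorem spineC_joyal {p : V → V} {r : V} (h : IsArb p r) (a : V) {i : ℕ}
    (hi : i < (spineL (joyal h a)).length) : spineC (joyal h a) i = p^[i] a := by
  have hi' : i < (Finset.sort (orbitF h a) (· ≤ ·)).length := by rwa [← spineL_joyal h a]
  rw [spineC, spineL_joyal h a, List.getD_eq_getElem _ _ hi']
  have hmem : (Finset.sort (orbitF h a) (· ≤ ·))[i] ∈ orbitF h a :=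
    (Finset.mem_sort _).mp (List.getElem_mem _)
  rw [joyal_mem h hmem, List.Nodup.idxOf_getElem (Finset.sort_nodup _ _) i hi']

theorem spineC_joyal_zero {p : V → V} {r : V} (h : IsArb p r) (a : V) :
    spineC (joyal h a) 0 = a := by
  have := length_spineL_joyal h a
  rw [spineC_joyal h a (by omega)]
  rfl

theorem rootOf_joyal {p : V → V} {r : V} (h : IsArb p r) (a : V) :
    rootOf (joyal h a) = r := by
  have hl := length_spineL_joyal h a
  rw [rootOf, spineC_joyal h a (by omega), hl]
  simpa using dep_spec h a

theorem dejoyal_joyal {p : V → V} {r : V} (h : IsArb p r) (a : V) :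
    dejoyal (joyal h a) = p := by
  funext v
  by_cases hv : v ∈ perF (joyal h a)
  · obtain ⟨i, hi, rfl⟩ := spineC_surj hv
    have hl := length_spineL_joyal h a
    by_cases h1 : i + 1 < (spineL (joyal h a)).length
    · rw [dejoyal_spineC h1, spineC_joyal h a h1, spineC_joyal h a hi,
        Function.iterate_succ_apply']
    · have h2 : i = (spineL (joyal h a)).length - 1 := by omega
      subst h2
      have h3 : p^[(spineL (joyal h a)).length - 1] a = r := by
        rw [hl]; simpa using dep_spec h a
      rw [dejoyal_spineC_last, spineC_joyal h a hi, h3, h.1]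
  · rw [dejoyal_not_mem hv, joyal_not_mem h (by rwa [perF_joyal] at hv)]

theorem dep_dejoyal (f : V → V) :
    dep (isArb_dejoyal f) (spineC f 0) = (spineL f).length - 1 := by
  have h0 := length_spineL_pos f
  have hle : dep (isArb_dejoyal f) (spineC f 0) ≤ (spineL f).length - 1 := by
    apply dep_le_of
    rw [dejoyal_iter_spineC f _ (by omega), rootOf]
    congr 1; omega
  have hspec := dep_spec (isArb_dejoyal f) (spineC f 0)
  rw [dejoyal_iter_spineC f _ (by omega)] at hspec
  have := spineC_inj (i := min (0 + dep (isArb_dejoyal f) (spineC f 0)) ((spineL f).length - 1))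
    (j := (spineL f).length - 1) (by omega) (by omega) hspec
  omega

theorem orbitF_dejoyal (f : V → V) :
    orbitF (isArb_dejoyal f) (spineC f 0) = perF f := by
  have h0 := length_spineL_pos f
  ext v
  rw [mem_orbitF, dep_dejoyal]
  constructor
  · rintro ⟨i, hi, rfl⟩
    rw [dejoyal_iter_spineC f _ (by omega)]
    exact spineC_mem (by omega)
  · intro hv
    obtain ⟨i, hi, rfl⟩ := spineC_surj hv
    refine ⟨i, by omega, ?_⟩
    rw [dejoyal_iter_spineC f _ (by omega)]
    congr 1; omega

theorem joyal_dejoyal (f : V → V) :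
    joyal (isArb_dejoyal f) (spineC f 0) = f := by
  have h0 := length_spineL_pos f
  funext v
  by_cases hv : v ∈ perF f
  · have hv' : v ∈ orbitF (isArb_dejoyal f) (spineC f 0) := by rwa [orbitF_dejoyal]
    rw [joyal_mem _ hv']
    have hsort : Finset.sort (orbitF (isArb_dejoyal f) (spineC f 0)) (· ≤ ·) = spineL f := by
      rw [orbitF_dejoyal]; rfl
    rw [hsort]
    have hlt : (spineL f).idxOf v < (spineL f).length :=
      List.idxOf_lt_length_iff.mpr (mem_spineL.mpr hv)
    rw [dejoyal_iter_spineC f _ (by omega), min_eq_left (by omega)]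
    rw [spineC, List.getD_eq_getElem _ _ (by omega : 0 + (spineL f).idxOf v < (spineL f).length)]
    congr 1
    simp only [Nat.zero_add]
    exact List.getElem_idxOf hlt
  · have hv' : v ∉ orbitF (isArb_dejoyal f) (spineC f 0) := by rwa [orbitF_dejoyal]
    rw [joyal_not_mem _ hv', dejoyal_not_mem hv]

/-- The Joyal bijection: doubly rooted trees (as parent functions with a marked vertex)
are in bijection with endofunctions. -/
noncomputable def joyalEquiv (V : Type*) [Fintype V] [LinearOrder V] [Nonempty V] :
    ({q : (V → V) × V // IsArb q.1 q.2} × V) ≃ (V → V) where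
  toFun x := joyal x.1.2 x.2
  invFun f := (⟨(dejoyal f, rootOf f), isArb_dejoyal f⟩, spineC f 0)
  left_inv x := by
    obtain ⟨⟨⟨p, r⟩, h⟩, a⟩ := x
    refine Prod.ext (Subtype.ext (Prod.ext ?_ ?_)) ?_
    · exact dejoyal_joyal h a
    · exact rootOf_joyal h a
    · exact spineC_joyal_zero h a
  right_inv f := joyal_dejoyal f

end RT

section Graph
open SimpleGraph
variable {V : Type*} [Fintype V] [LinearOrder V]

/-- the graph whose edges join each vertex to its parent. -/
def arbGraph (p : V → V) : SimpleGraph V where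
  Adj v w := v ≠ w ∧ (p v = w ∨ p w = v)
  symm := ⟨fun v w ⟨h1, h2⟩ => ⟨h1.symm, h2.symm⟩⟩
  loopless := ⟨fun v ⟨h1, _⟩ => h1 rfl⟩

theorem arbGraph_adj {p : V → V} {v w : V} :
    (arbGraph p).Adj v w ↔ v ≠ w ∧ (p v = w ∨ p w = v) := Iff.rfl

theorem arbGraph_adj_parent {p : V → V} {r : V} (h : IsArb p r) {v : V} (hv : v ≠ r) :
    (arbGraph p).Adj v (p v) := by
  refine ⟨fun heq => ?_, Or.inl rfl⟩
  exact hv (h.eq_root_of_periodic le_rfl (by simpa using heq.symm))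

theorem arbGraph_reachable {p : V → V} {r : V} (h : IsArb p r) (v : V) :
    (arbGraph p).Reachable v r := by
  have key : ∀ (k : ℕ) (v : V), dep h v ≤ k → (arbGraph p).Reachable v r := by
    intro k
    induction k with
    | zero =>
      intro v hv
      have : v = r := (dep_eq_zero_iff h).mp (by omega)
      subst this; rfl
    | succ n ih =>
      intro v hv
      by_cases hvr : v = r
      · subst hvr; rfl
      · refine ((arbGraph_adj_parent h hvr).reachable).trans (ih (p v) ?_)
        rw [dep_apply h hvr]
        have := dep_pos h hvr
        omega
  exact key (dep h v) v le_rfl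

theorem arbGraph_connected {p : V → V} {r : V} (h : IsArb p r) : (arbGraph p).Connected := by
  haveI : Nonempty V := ⟨r⟩
  exact Connected.mk (fun v w => (arbGraph_reachable h v).trans (arbGraph_reachable h w).symm)

theorem isPath_getVert_inj {G : SimpleGraph V} {u v : V} {q : G.Walk u v} (hq : q.IsPath)
    {i j : ℕ} (hi : i ≤ q.length) (hj : j ≤ q.length) (h : q.getVert i = q.getVert j) : i = j := by
  induction q generalizing i j with
  | nil => simp at hi hj; omega
  | @cons u x v hadj q ih =>
    rw [Walk.cons_isPath_iff] at hq
    match i, j with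
    | 0, 0 => rfl
    | 0, j+1 =>
      exfalso
      rw [Walk.getVert_zero, Walk.getVert_cons_succ] at h
      refine hq.2 (Walk.mem_support_iff_exists_getVert.mpr ⟨j, h.symm, ?_⟩)
      simp only [Walk.length_cons] at hj; omega
    | i+1, 0 =>
      exfalso
      rw [Walk.getVert_zero, Walk.getVert_cons_succ] at h
      refine hq.2 (Walk.mem_support_iff_exists_getVert.mpr ⟨i, h, ?_⟩)
      simp only [Walk.length_cons] at hi; omega
    | i+1, j+1 =>
      simp only [Walk.length_cons] at hi hj
      rw [Walk.getVert_cons_succ, Walk.getVert_cons_succ] at h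
      have := ih hq.1 (by omega) (by omega) h
      omega

theorem max_neighbor {p : V → V} {r : V} (h : IsArb p r) {u x : V}
    (hadj : (arbGraph p).Adj u x) (hle : dep h x ≤ dep h u) : p u = x := by
  rcases hadj.2 with h1 | h1
  · exact h1
  · exfalso
    have hxr : x ≠ r := by
      rintro rfl
      rw [h.1] at h1
      exact hadj.1 h1.symm
    have h2 := dep_apply h hxr
    rw [h1] at h2
    have := dep_pos h hxr
    omega

theorem arbGraph_acyclic {p : V → V} {r : V} (h : IsArb p r) : (arbGraph p).IsAcyclic := by
  intro v c hc
  obtain ⟨u, hu, hmax⟩ : ∃ u ∈ c.support, ∀ w ∈ c.support, dep h w ≤ dep h u := by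
    obtain ⟨u, hu1, hu2⟩ := Finset.exists_max_image c.support.toFinset (dep h)
      ⟨v, by simp [Walk.start_mem_support]⟩
    exact ⟨u, by simpa using hu1, fun w hw => hu2 w (by simpa using hw)⟩
  have hcyc : (c.rotate u hu).IsCycle := (Walk.isCycle_rotate hu).mpr hc
  have hsupp : ∀ x, x ∈ (c.rotate u hu).support → x ∈ c.support := by
    intro x hx
    rw [Walk.support_eq_cons] at hx
    rcases List.mem_cons.mp hx with rfl | hx
    · exact hu
    · have hperm := Walk.support_rotate c u hu
      rw [Walk.support_eq_cons c]
      exact List.mem_cons.mpr (Or.inr (hperm.perm.mem_iff.mp hx))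
  obtain ⟨w, hadj, q, hq⟩ := Walk.not_nil_iff.mp hcyc.not_nil
  rw [hq] at hcyc
  rw [Walk.cons_isCycle_iff] at hcyc
  have hlen : 2 ≤ q.length := by
    have h3 := ((Walk.isCycle_rotate hu).mpr hc).three_le_length
    rw [hq, Walk.length_cons] at h3
    omega
  -- w is on the cycle
  have hwsup : w ∈ c.support := by
    apply hsupp; rw [hq]
    simp [Walk.support_cons, Walk.start_mem_support]
  -- second neighbor y
  set y := q.getVert (q.length - 1) with hy
  have hadjy : (arbGraph p).Adj y u := by
    have := q.adj_getVert_succ (i := q.length - 1) (by omega)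
    rw [show q.length - 1 + 1 = q.length by omega, Walk.getVert_length] at this
    exact this
  have hysup : y ∈ c.support := by
    apply hsupp; rw [hq]
    rw [Walk.support_cons]
    refine List.mem_cons.mpr (Or.inr ?_)
    exact Walk.mem_support_iff_exists_getVert.mpr ⟨q.length - 1, rfl, by omega⟩
  have h1 : p u = w := max_neighbor h hadj (hmax w hwsup)
  have h2 : p u = y := max_neighbor h hadjy.symm (hmax y hysup)
  have hwy : w ≠ y := by
    intro heq
    have h0 : q.getVert 0 = q.getVert (q.length - 1) := by
      rw [Walk.getVert_zero, ← hy, heq]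
    have := isPath_getVert_inj hcyc.1 (by omega) (by omega) h0
    omega
  exact hwy (h1 ▸ h2)

end Graph

section TreeFun
open SimpleGraph
variable {V : Type*} [Fintype V] [LinearOrder V]

theorem arbGraph_isTree {p : V → V} {r : V} (h : IsArb p r) : (arbGraph p).IsTree :=
  ⟨arbGraph_connected h, arbGraph_acyclic h⟩

/-- the chosen path from `v` to `r` in a tree. -/
noncomputable def pathTo {T : SimpleGraph V} (hT : T.IsTree) (r v : V) : T.Walk v r :=
  ((hT.existsUnique_path v r).exists).choose

theorem pathTo_isPath {T : SimpleGraph V} (hT : T.IsTree) (r v : V) :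
    (pathTo hT r v).IsPath := ((hT.existsUnique_path v r).exists).choose_spec

theorem pathTo_eq {T : SimpleGraph V} (hT : T.IsTree) {r v : V} (q : T.Walk v r)
    (hq : q.IsPath) : q = pathTo hT r v :=
  (hT.existsUnique_path v r).unique hq (pathTo_isPath hT r v)

theorem pathTo_self {T : SimpleGraph V} (hT : T.IsTree) (r : V) :
    pathTo hT r r = Walk.nil :=
  (pathTo_eq hT Walk.nil Walk.IsPath.nil).symm

/-- the parent function of a tree with chosen root `r`. -/
noncomputable def treeFun {T : SimpleGraph V} (hT : T.IsTree) (r : V) : V → V := fun v =>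
  (pathTo hT r v).getVert 1

theorem treeFun_fixed {T : SimpleGraph V} (hT : T.IsTree) (r : V) : treeFun hT r r = r := by
  rw [treeFun, pathTo_self]
  exact Walk.getVert_of_length_le _ (by simp)

theorem pathTo_not_nil {T : SimpleGraph V} (hT : T.IsTree) {r v : V} (hv : v ≠ r) :
    ¬ (pathTo hT r v).Nil := Walk.not_nil_of_ne hv

theorem treeFun_adj {T : SimpleGraph V} (hT : T.IsTree) {r v : V} (hv : v ≠ r) :
    T.Adj v (treeFun hT r v) :=
  Walk.adj_snd (pathTo_not_nil hT hv)

theorem pathTo_tail {T : SimpleGraph V} (hT : T.IsTree) {r v : V} (hv : v ≠ r) :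
    (pathTo hT r v).tail = pathTo hT r (treeFun hT r v) :=
  pathTo_eq hT _ ((pathTo_isPath hT r v).tail)

theorem pathTo_length_treeFun {T : SimpleGraph V} (hT : T.IsTree) {r v : V} (hv : v ≠ r) :
    (pathTo hT r (treeFun hT r v)).length + 1 = (pathTo hT r v).length := by
  rw [← pathTo_tail hT hv]
  exact Walk.length_tail_add_one (pathTo_not_nil hT hv)

theorem treeFun_isArb {T : SimpleGraph V} (hT : T.IsTree) (r : V) :
    IsArb (treeFun hT r) r := by
  have key : ∀ (k : ℕ) (v : V), (pathTo hT r v).length ≤ k → (treeFun hT r)^[k] v = r := by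
    intro k
    induction k with
    | zero =>
      intro v hv
      simpa using Walk.eq_of_length_eq_zero (p := pathTo hT r v) (by omega)
    | succ n ih =>
      intro v hv
      by_cases hvr : v = r
      · subst hvr
        exact Function.iterate_fixed (treeFun_fixed hT _) _
      · rw [Function.iterate_succ_apply]
        apply ih
        have := pathTo_length_treeFun hT hvr
        omega
  refine ⟨treeFun_fixed hT r, fun v => key _ v ?_⟩
  have := (pathTo_isPath hT r v).length_lt
  omega

theorem arbGraph_treeFun {T : SimpleGraph V} (hT : T.IsTree) (r : V) :
    arbGraph (treeFun hT r) = T := by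
  ext v w
  rw [arbGraph_adj]
  constructor
  · rintro ⟨hne, h1 | h1⟩
    · have hvr : v ≠ r := by
        rintro rfl
        rw [treeFun_fixed] at h1
        exact hne h1
      exact h1 ▸ treeFun_adj hT hvr
    · have hwr : w ≠ r := by
        rintro rfl
        rw [treeFun_fixed] at h1
        exact hne h1.symm
      exact (h1 ▸ treeFun_adj hT hwr).symm
  · intro hadj
    refine ⟨hadj.ne, ?_⟩
    by_cases hw : w = (pathTo hT r v).getVert 1
    · exact Or.inl hw.symm
    · have hwsup : w ∉ (pathTo hT r v).support := by
        intro hmem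
        apply hw
        have hsingle : (Walk.cons hadj Walk.nil : T.Walk v w).IsPath := by
          rw [Walk.cons_isPath_iff]
          exact ⟨Walk.IsPath.nil, by simp [hadj.ne]⟩
        have ht : (pathTo hT r v).takeUntil w hmem = Walk.cons hadj Walk.nil := by
          have h2 := hT.2.path_unique
            ⟨(pathTo hT r v).takeUntil w hmem, (pathTo_isPath hT r v).takeUntil hmem⟩
            ⟨Walk.cons hadj Walk.nil, hsingle⟩
          exact congrArg Subtype.val h2
        have hspec := Walk.take_spec (pathTo hT r v) hmem
        rw [ht] at hspec
        rw [← hspec, Walk.cons_append, Walk.nil_append, Walk.getVert_cons_succ,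
          Walk.getVert_zero]
      have hpath : (Walk.cons hadj.symm (pathTo hT r v)).IsPath := by
        rw [Walk.cons_isPath_iff]
        exact ⟨pathTo_isPath hT r v, hwsup⟩
      have := pathTo_eq hT _ hpath
      refine Or.inr ?_
      rw [treeFun, ← this, Walk.getVert_cons_succ, Walk.getVert_zero]

/-- the trajectory of `v` as a walk to the root in `arbGraph p`. -/
noncomputable def trajWalk {p : V → V} {r : V} (h : IsArb p r) :
    ∀ (k : ℕ) (v : V), (arbGraph p).Walk v r
  | 0, v => if hv : v = r then (Walk.nil : (arbGraph p).Walk r r).copy hv.symm rfl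
      else (arbGraph_reachable h v).some
  | k+1, v => if hv : v = r then (Walk.nil : (arbGraph p).Walk r r).copy hv.symm rfl
      else Walk.cons (arbGraph_adj_parent h hv) (trajWalk h k (p v))

end TreeFun

section RTB
open SimpleGraph
variable {V : Type*} [Fintype V] [LinearOrder V]

theorem trajWalk_r {p : V → V} {r : V} (h : IsArb p r) (k : ℕ) :
    trajWalk h k r = (Walk.nil : (arbGraph p).Walk r r).copy rfl rfl := by
  cases k <;> simp [trajWalk]

theorem trajWalk_support {p : V → V} {r : V} (h : IsArb p r) :
    ∀ (k : ℕ) (v : V), dep h v ≤ k → ∀ x ∈ (trajWalk h k v).support, ∃ i, p^[i] v = x := by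
  intro k
  induction k with
  | zero =>
    intro v hv x hx
    have hvr : v = r := (dep_eq_zero_iff h).mp (by omega)
    subst hvr
    rw [trajWalk_r] at hx
    simp only [Walk.support_copy, Walk.support_nil, List.mem_singleton] at hx
    exact ⟨0, hx.symm⟩
  | succ n ih =>
    intro v hv x hx
    by_cases hvr : v = r
    · subst hvr
      rw [trajWalk_r] at hx
      simp only [Walk.support_copy, Walk.support_nil, List.mem_singleton] at hx
      exact ⟨0, hx.symm⟩
    · rw [trajWalk, dif_neg hvr, Walk.support_cons] at hx
      rcases List.mem_cons.mp hx with rfl | hx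
      · exact ⟨0, rfl⟩
      · have hd : dep h (p v) ≤ n := by
          rw [dep_apply h hvr]
          have := dep_pos h hvr
          omega
        obtain ⟨i, hi⟩ := ih (p v) hd x hx
        exact ⟨i + 1, by rw [Function.iterate_succ_apply, hi]⟩

theorem trajWalk_isPath {p : V → V} {r : V} (h : IsArb p r) :
    ∀ (k : ℕ) (v : V), dep h v ≤ k → (trajWalk h k v).IsPath := by
  intro k
  induction k with
  | zero =>
    intro v hv
    have hvr : v = r := (dep_eq_zero_iff h).mp (by omega)
    subst hvr
    rw [trajWalk_r]
    simp
  | succ n ih =>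
    intro v hv
    by_cases hvr : v = r
    · subst hvr
      rw [trajWalk_r]
      simp
    · rw [trajWalk, dif_neg hvr, Walk.cons_isPath_iff]
      have hd : dep h (p v) ≤ n := by
        rw [dep_apply h hvr]
        have := dep_pos h hvr
        omega
      refine ⟨ih (p v) hd, fun hmem => ?_⟩
      obtain ⟨i, hi⟩ := trajWalk_support h n (p v) hd v hmem
      rw [← Function.iterate_succ_apply] at hi
      exact hvr (h.eq_root_of_periodic (k := i + 1) (by omega) hi)

theorem trajWalk_getVert_one {p : V → V} {r : V} (h : IsArb p r) {v : V} (hv : v ≠ r) (k : ℕ) :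
    (trajWalk h (k+1) v).getVert 1 = p v := by
  rw [trajWalk, dif_neg hv, Walk.getVert_cons_succ, Walk.getVert_zero]

theorem treeFun_arbGraph {p : V → V} {r : V} (h : IsArb p r) :
    treeFun (arbGraph_isTree h) r = p := by
  funext v
  by_cases hvr : v = r
  · rw [hvr, treeFun_fixed, h.1]
  · obtain ⟨k, hk⟩ : ∃ k, dep h v = k + 1 := ⟨dep h v - 1, by have := dep_pos h hvr; omega⟩
    have hpath := trajWalk_isPath h (dep h v) v le_rfl
    have heq := pathTo_eq (arbGraph_isTree h) (trajWalk h (dep h v) v) hpath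
    rw [treeFun, ← heq, hk, trajWalk_getVert_one h hvr]

/-- rooted trees are in bijection with parent functions. -/
noncomputable def treeEquiv (V : Type*) [Fintype V] [LinearOrder V] :
    ({T : SimpleGraph V // T.IsTree} × V) ≃ {q : (V → V) × V // IsArb q.1 q.2} where
  toFun x := ⟨(treeFun x.1.2 x.2, x.2), treeFun_isArb x.1.2 x.2⟩
  invFun q := (⟨arbGraph q.1.1, arbGraph_isTree q.2⟩, q.1.2)
  left_inv x := by
    obtain ⟨⟨T, hT⟩, r⟩ := x
    exact Prod.ext (Subtype.ext (arbGraph_treeFun hT r)) rfl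
  right_inv q := by
    obtain ⟨⟨p, r⟩, h⟩ := q
    exact Subtype.ext (Prod.ext (treeFun_arbGraph h) rfl)

end RTB

/-- Cayley's formula: the number of labeled trees on `i ≥ 1` vertices equals `i^(i-2)`. -/
theorem cayley_formula (i : ℕ) (hi : 1 ≤ i) :
    Nat.card {G : SimpleGraph (Fin i) // G.IsTree} = i ^ (i - 2) := by
  haveI : Nonempty (Fin i) := ⟨⟨0, hi⟩⟩
  have e : ({T : SimpleGraph (Fin i) // T.IsTree} × Fin i) × Fin i ≃ (Fin i → Fin i) :=
    (Equiv.prodCongr (treeEquiv (Fin i)) (Equiv.refl (Fin i))).trans (joyalEquiv (Fin i))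
  have hcard := Nat.card_congr e
  rw [Nat.card_prod, Nat.card_prod, Nat.card_fun] at hcard
  simp only [Nat.card_eq_fintype_card, Fintype.card_fin] at hcard
  have hpow : i ^ i = i ^ (i - 2) * (i * i) := by
    match i, hi with
    | 1, _ => norm_num
    | (n+2), _ =>
      have h2 : n + 2 - 2 = n := by omega
      rw [h2]
      ring
  rw [hpow] at hcard
  have hpos : 0 < i * i := by positivity
  apply Nat.eq_of_mul_eq_mul_right hpos
  rw [← mul_assoc, hcard]
end
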